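/- arXiv:0709.3401 — 3 statements merged into one kernel-verified Lean document; each statement's English description precedes it below -/
import Mathlib

section
/- For every fixed β > 0 and x ≥ 0, the function α ↦ p₀ᴮ(β,α,x) is convex on the half-line (−∞, 0]. -/
open MeasureTheory Real Filter Set

/-- One-particle energy `ε_k = ‖k‖²/2` (units `ħ = m = 1`). -/
noncomputable def eps (k : EuclideanSpace ℝ (Fin 3)) : ℝ := ‖k‖ ^ 2 / 2

/-- Pressure of the Bogoliubov approximation `p₀ᴮ(β,α,x)`. -/
noncomputable def p0B (lam : EuclideanSpace ℝ (Fin 3) → ℝ) (β α x : ℝ) : ℝ :=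
  α * x
    - (β * (2 * π) ^ 3)⁻¹ *
        (∫ k : EuclideanSpace ℝ (Fin 3),
          Real.log (1 - Real.exp (-(β * Real.sqrt ((eps k - α) * (eps k - α + 2 * x * lam k))))))
    + (2 * (2 * π) ^ 3)⁻¹ *
        (∫ k : EuclideanSpace ℝ (Fin 3),
          (eps k - α + x * lam k - Real.sqrt ((eps k - α) * (eps k - α + 2 * x * lam k))))

/-- Legendre–Fenchel transform `f₀ᴮ(β,y,x) = sup_{α ≤ 0} {α(y+x) − p₀ᴮ(β,α,x)}`. -/
noncomputable def f0B (lam : EuclideanSpace ℝ (Fin 3) → ℝ) (β y x : ℝ) : ℝ :=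
  sSup {v : ℝ | ∃ α ≤ (0 : ℝ), v = α * (y + x) - p0B lam β α x}



section Aux
open Metric

private lemma gconvex (β m : ℝ) (hβ : 0 < β) (hm : 0 ≤ m) :
    ConvexOn ℝ (Ioi m)
      (fun v => -(1/β) * Real.log (1 - Real.exp (-(β * Real.sqrt (v^2 - m^2))))
        + (1/2) * (v - Real.sqrt (v^2 - m^2))) := by
  have key : ∀ v ∈ Ioi m, HasDerivAt
      (fun v => -(1/β) * Real.log (1 - Real.exp (-(β * Real.sqrt (v^2 - m^2))))
        + (1/2) * (v - Real.sqrt (v^2 - m^2)))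
      (1/2 - (v / Real.sqrt (v^2 - m^2)) *
        (Real.exp (-(β * Real.sqrt (v^2 - m^2))) /
          (1 - Real.exp (-(β * Real.sqrt (v^2 - m^2)))) + 1/2)) v := by
    intro v hv
    have hv' : m < v := hv
    have hv0 : 0 < v := hm.trans_lt hv'
    have hpos : 0 < v^2 - m^2 := by nlinarith
    have hE : 0 < Real.sqrt (v^2 - m^2) := Real.sqrt_pos.2 hpos
    have h1 : HasDerivAt (fun w : ℝ => w^2 - m^2) (2*v) v := by
      simpa using (hasDerivAt_pow 2 v).sub_const (m^2)
    have hsq : HasDerivAt (fun w : ℝ => Real.sqrt (w^2 - m^2))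
        (v / Real.sqrt (v^2 - m^2)) v := by
      have h2 := (Real.hasDerivAt_sqrt hpos.ne').comp v h1
      refine HasDerivAt.congr_deriv h2 ?_
      field_simp
    have hA : HasDerivAt (fun w : ℝ => Real.exp (-(β * Real.sqrt (w^2 - m^2))))
        (Real.exp (-(β * Real.sqrt (v^2 - m^2))) * (-(β * (v / Real.sqrt (v^2 - m^2))))) v :=
      ((hsq.const_mul β).neg).exp
    have hden : (0:ℝ) < 1 - Real.exp (-(β * Real.sqrt (v^2 - m^2))) := by
      have : Real.exp (-(β * Real.sqrt (v^2 - m^2))) < 1 :=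
        Real.exp_lt_one_iff.2 (by nlinarith)
      linarith
    have hinner : HasDerivAt (fun w : ℝ => 1 - Real.exp (-(β * Real.sqrt (w^2 - m^2))))
        (-(Real.exp (-(β * Real.sqrt (v^2 - m^2))) * (-(β * (v / Real.sqrt (v^2 - m^2)))))) v :=
      hA.const_sub 1
    have hlog := hinner.log hden.ne'
    have h2 : HasDerivAt (fun w : ℝ => (1/2) * (w - Real.sqrt (w^2 - m^2)))
        ((1/2) * (1 - v / Real.sqrt (v^2 - m^2))) v := ((hasDerivAt_id v).sub hsq).const_mul (1/2)
    have h3 := (hlog.const_mul (-(1/β))).add h2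
    refine HasDerivAt.congr_deriv h3 ?_
    field_simp
    ring
  have hmono : MonotoneOn (fun v => 1/2 - (v / Real.sqrt (v^2 - m^2)) *
        (Real.exp (-(β * Real.sqrt (v^2 - m^2))) /
          (1 - Real.exp (-(β * Real.sqrt (v^2 - m^2)))) + 1/2)) (Ioi m) := by
    intro v₁ h₁ v₂ h₂ h12
    simp only
    have hv₁ : m < v₁ := h₁
    have hv₂ : m < v₂ := h₂
    have hv₁0 : 0 < v₁ := hm.trans_lt hv₁
    have hv₂0 : 0 < v₂ := hm.trans_lt hv₂
    have hp₁ : 0 < v₁ ^ 2 - m ^ 2 := by nlinarith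
    have hp₂ : 0 < v₂ ^ 2 - m ^ 2 := by nlinarith
    have hE₁ : 0 < Real.sqrt (v₁^2 - m^2) := Real.sqrt_pos.2 hp₁
    have hE₂ : 0 < Real.sqrt (v₂^2 - m^2) := Real.sqrt_pos.2 hp₂
    have hE12 : Real.sqrt (v₁^2 - m^2) ≤ Real.sqrt (v₂^2 - m^2) :=
      Real.sqrt_le_sqrt (by nlinarith)
    have hP : v₂ / Real.sqrt (v₂^2 - m^2) ≤ v₁ / Real.sqrt (v₁^2 - m^2) := by
      rw [div_le_div_iff₀ hE₂ hE₁]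
      have e1 : v₂ * Real.sqrt (v₁^2 - m^2) = Real.sqrt (v₂^2 * (v₁^2 - m^2)) := by
        rw [Real.sqrt_mul (by positivity), Real.sqrt_sq hv₂0.le]
      have e2 : v₁ * Real.sqrt (v₂^2 - m^2) = Real.sqrt (v₁^2 * (v₂^2 - m^2)) := by
        rw [Real.sqrt_mul (by positivity), Real.sqrt_sq hv₁0.le]
      rw [e1, e2]
      have hsq12 : v₁^2 ≤ v₂^2 := by nlinarith
      refine Real.sqrt_le_sqrt ?_
      nlinarith [mul_le_mul_of_nonneg_left hsq12 (sq_nonneg m)]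
    have hA₁pos : 0 < Real.exp (-(β * Real.sqrt (v₁^2 - m^2))) := Real.exp_pos _
    have hA₂pos : 0 < Real.exp (-(β * Real.sqrt (v₂^2 - m^2))) := Real.exp_pos _
    have hA₁lt : Real.exp (-(β * Real.sqrt (v₁^2 - m^2))) < 1 :=
      Real.exp_lt_one_iff.2 (by nlinarith)
    have hA₂lt : Real.exp (-(β * Real.sqrt (v₂^2 - m^2))) < 1 :=
      Real.exp_lt_one_iff.2 (by nlinarith)
    have hA21 : Real.exp (-(β * Real.sqrt (v₂^2 - m^2))) ≤ Real.exp (-(β * Real.sqrt (v₁^2 - m^2))) :=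
      Real.exp_le_exp.2 (by nlinarith)
    have hΦ : Real.exp (-(β * Real.sqrt (v₂^2 - m^2))) / (1 - Real.exp (-(β * Real.sqrt (v₂^2 - m^2))))
        ≤ Real.exp (-(β * Real.sqrt (v₁^2 - m^2))) / (1 - Real.exp (-(β * Real.sqrt (v₁^2 - m^2)))) := by
      rw [div_le_div_iff₀ (by linarith) (by linarith)]
      nlinarith
    have hΦ₂nn : 0 ≤ Real.exp (-(β * Real.sqrt (v₂^2 - m^2))) / (1 - Real.exp (-(β * Real.sqrt (v₂^2 - m^2)))) :=
      div_nonneg hA₂pos.le (by linarith)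
    have hP₁nn : 0 ≤ v₁ / Real.sqrt (v₁^2 - m^2) := by positivity
    have hq : v₂ / Real.sqrt (v₂^2 - m^2) *
        (Real.exp (-(β * Real.sqrt (v₂^2 - m^2))) / (1 - Real.exp (-(β * Real.sqrt (v₂^2 - m^2)))) + 1/2)
        ≤ v₁ / Real.sqrt (v₁^2 - m^2) *
        (Real.exp (-(β * Real.sqrt (v₁^2 - m^2))) / (1 - Real.exp (-(β * Real.sqrt (v₁^2 - m^2)))) + 1/2) :=
      mul_le_mul hP (by linarith) (by linarith) hP₁nn
    linarith
  have hmono' : MonotoneOn (deriv (fun v => -(1/β) * Real.log (1 - Real.exp (-(β * Real.sqrt (v^2 - m^2))))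
        + (1/2) * (v - Real.sqrt (v^2 - m^2)))) (interior (Ioi m)) := by
    rw [interior_Ioi]
    exact hmono.congr fun v hv => ((key v hv).deriv).symm
  exact hmono'.convexOn_of_deriv (convex_Ioi m)
    (fun v hv => (key v hv).differentiableAt.continuousAt.continuousWithinAt)
    (by rw [interior_Ioi]; exact fun v hv => (key v hv).differentiableAt.differentiableWithinAt)

private lemma Gconv (β t m : ℝ) (hβ : 0 < β) (ht : 0 < t) (hm : 0 ≤ m) :
    ConvexOn ℝ (Iic (0:ℝ))
      (fun α => -(1/β) * Real.log (1 - Real.exp (-(β * Real.sqrt ((t - α) * (t - α + 2 * m)))))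
        + (1/2) * (t - α + m - Real.sqrt ((t - α) * (t - α + 2 * m)))) := by
  have hfun : ∀ α : ℝ,
      -(1/β) * Real.log (1 - Real.exp (-(β * Real.sqrt ((t - α) * (t - α + 2 * m)))))
        + (1/2) * (t - α + m - Real.sqrt ((t - α) * (t - α + 2 * m)))
      = -(1/β) * Real.log (1 - Real.exp (-(β * Real.sqrt ((t + m - α)^2 - m^2))))
        + (1/2) * ((t + m - α) - Real.sqrt ((t + m - α)^2 - m^2)) := by
    intro α
    have : (t - α) * (t - α + 2 * m) = (t + m - α)^2 - m^2 := by ring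
    rw [this]
    ring
  have hg := gconvex β m hβ hm
  refine ⟨convex_Iic 0, fun a ha b hb p q hp hq hpq => ?_⟩
  have hmem : ∀ c : ℝ, c ∈ Iic (0:ℝ) → t + m - c ∈ Ioi m := by
    intro c hc
    simp only [mem_Iic] at hc
    simp only [mem_Ioi]
    linarith
  have key := hg.2 (hmem a ha) (hmem b hb) hp hq hpq
  simp only [smul_eq_mul] at key ⊢
  have haff : t + m - (p * a + q * b) = p * (t + m - a) + q * (t + m - b) := by
    have : p + q = 1 := hpq
    nlinarith [this]
  rw [hfun, hfun, hfun, haff]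
  convert key using 3 <;> ring

private lemma singInt :
    IntegrableOn (fun k : EuclideanSpace ℝ (Fin 3) => ‖k‖ ^ (-(2:ℝ)))
      (ball (0 : EuclideanSpace ℝ (Fin 3)) 1) volume := by
  set μ := volume.restrict (ball (0 : EuclideanSpace ℝ (Fin 3)) 1) with hμ
  have hmeas : Measurable fun k : EuclideanSpace ℝ (Fin 3) => ‖k‖ ^ (-(2:ℝ)) :=
    (measurable_norm).pow_const _
  refine ⟨hmeas.aestronglyMeasurable, ?_⟩
  rw [hasFiniteIntegral_iff_norm]
  have hnorm : ∀ k : EuclideanSpace ℝ (Fin 3), ‖‖k‖ ^ (-(2:ℝ))‖ = ‖k‖ ^ (-(2:ℝ)) := by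
    intro k
    rw [Real.norm_eq_abs, abs_of_nonneg (Real.rpow_nonneg (norm_nonneg _) _)]
  simp only [hnorm]
  have hrw := lintegral_eq_lintegral_meas_le μ
    (Eventually.of_forall fun k => Real.rpow_nonneg (norm_nonneg _) _) hmeas.aemeasurable
  rw [hrw]
  -- bound the measure of superlevel sets
  set mB := volume (ball (0 : EuclideanSpace ℝ (Fin 3)) 1) with hmB
  have hmBfin : mB < ⊤ := measure_ball_lt_top
  have hbound : ∀ t : ℝ, 0 < t →
      μ {a | t ≤ ‖a‖ ^ (-(2:ℝ))} ≤ min mB (ENNReal.ofReal ((Real.sqrt t⁻¹) ^ 3) * mB) := by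
    intro t ht
    refine le_min ?_ ?_
    · calc μ {a | t ≤ ‖a‖ ^ (-(2:ℝ))} ≤ μ univ := measure_mono (subset_univ _)
        _ = mB := by rw [hμ, Measure.restrict_apply_univ]
    · have hsub : {a : EuclideanSpace ℝ (Fin 3) | t ≤ ‖a‖ ^ (-(2:ℝ))} ⊆
          closedBall 0 (Real.sqrt t⁻¹) := by
        intro a ha
        simp only [mem_setOf_eq] at ha
        simp only [mem_closedBall, dist_zero_right]
        rcases eq_or_ne a 0 with rfl | h0
        · simp only [norm_zero] at ha ⊢
          rw [Real.zero_rpow (by norm_num)] at ha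
          linarith [Real.sqrt_nonneg t⁻¹]
        · have hn : 0 < ‖a‖ := norm_pos_iff.2 h0
          have : ‖a‖ ^ (-(2:ℝ)) = (‖a‖^2)⁻¹ := by
            rw [Real.rpow_neg (norm_nonneg _), show ((2:ℝ)) = ((2:ℕ):ℝ) by norm_num,
              Real.rpow_natCast]
          rw [this] at ha
          have h2 : ‖a‖^2 ≤ t⁻¹ := by
            rw [← inv_inv (‖a‖^2)]
            exact inv_anti₀ ht ha
          calc ‖a‖ = Real.sqrt (‖a‖^2) := (Real.sqrt_sq hn.le).symm
            _ ≤ Real.sqrt t⁻¹ := Real.sqrt_le_sqrt h2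
      calc μ {a | t ≤ ‖a‖ ^ (-(2:ℝ))} ≤ μ (closedBall 0 (Real.sqrt t⁻¹)) := measure_mono hsub
        _ ≤ volume (closedBall (0:EuclideanSpace ℝ (Fin 3)) (Real.sqrt t⁻¹)) :=
            Measure.restrict_le_self _
        _ = ENNReal.ofReal ((Real.sqrt t⁻¹) ^ Module.finrank ℝ (EuclideanSpace ℝ (Fin 3))) * mB := by
            rw [Measure.addHaar_closedBall _ _ (Real.sqrt_nonneg _)]
        _ = ENNReal.ofReal ((Real.sqrt t⁻¹) ^ 3) * mB := by
            rw [finrank_euclideanSpace_fin]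
  calc ∫⁻ t in Ioi (0:ℝ), μ {a | t ≤ ‖a‖ ^ (-(2:ℝ))}
      ≤ ∫⁻ t in Ioc (0:ℝ) 1 ∪ Ioi 1, μ {a | t ≤ ‖a‖ ^ (-(2:ℝ))} :=
        lintegral_mono_set Ioi_subset_Ioc_union_Ioi
    _ ≤ (∫⁻ t in Ioc (0:ℝ) 1, μ {a | t ≤ ‖a‖ ^ (-(2:ℝ))})
        + ∫⁻ t in Ioi (1:ℝ), μ {a | t ≤ ‖a‖ ^ (-(2:ℝ))} := lintegral_union_le _ _ _
    _ < ⊤ := by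
        refine ENNReal.add_lt_top.2 ⟨?_, ?_⟩
        · calc (∫⁻ t in Ioc (0:ℝ) 1, μ {a | t ≤ ‖a‖ ^ (-(2:ℝ))})
              ≤ ∫⁻ _ in Ioc (0:ℝ) 1, mB := by
                refine setLIntegral_mono' measurableSet_Ioc fun t ht => ?_
                exact le_trans (hbound t ht.1) (min_le_left _ _)
            _ = mB * volume (Ioc (0:ℝ) 1) := by rw [setLIntegral_const]
            _ < ⊤ := ENNReal.mul_lt_top hmBfin (by simp)
        · calc (∫⁻ t in Ioi (1:ℝ), μ {a | t ≤ ‖a‖ ^ (-(2:ℝ))})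
              ≤ ∫⁻ t in Ioi (1:ℝ), ENNReal.ofReal (t ^ (-(3:ℝ)/2)) * mB := by
                refine setLIntegral_mono' measurableSet_Ioi fun t ht => ?_
                have ht1 : (1:ℝ) < t := ht
                have ht0 : 0 < t := lt_trans one_pos ht1
                refine le_trans (le_trans (hbound t ht0) (min_le_right _ _)) ?_
                have heq : (Real.sqrt t⁻¹) ^ 3 = t ^ (-(3:ℝ)/2) := by
                  rw [← Real.rpow_natCast (Real.sqrt t⁻¹) 3, Real.sqrt_eq_rpow,
                    ← Real.rpow_mul (inv_nonneg.2 ht0.le),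
                    ← Real.rpow_neg_one t, ← Real.rpow_mul ht0.le]
                  norm_num
                rw [heq]
            _ = (∫⁻ t in Ioi (1:ℝ), ENNReal.ofReal (t ^ (-(3:ℝ)/2))) * mB :=
                lintegral_mul_const' _ _ hmBfin.ne
            _ < ⊤ := ENNReal.mul_lt_top
                ((integrableOn_Ioi_rpow_of_lt (by norm_num) one_pos).setLIntegral_lt_top) hmBfin

private lemma gaussInt {b : ℝ} (hb : 0 < b) :
    Integrable (fun k : EuclideanSpace ℝ (Fin 3) => Real.exp (-b * ‖k‖^2)) volume := by
  have h := (GaussianFourier.integrable_cexp_neg_mul_sq_norm_add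
    (V := EuclideanSpace ℝ (Fin 3)) (b := (b:ℂ)) (by simpa using hb) 0 0).norm
  refine h.congr (Eventually.of_forall fun k => ?_)
  simp [Complex.norm_exp, ← Complex.ofReal_pow]

private lemma eps_cont : Continuous eps := by
  unfold eps
  exact (continuous_norm.pow 2).div_const 2

private lemma eps_nonneg (k : EuclideanSpace ℝ (Fin 3)) : 0 ≤ eps k := by
  unfold eps; positivity

-- basic bounds on s
private lemma s_bounds {u m : ℝ} (hu : 0 ≤ u) (hm : 0 ≤ m) :
    u ≤ Real.sqrt (u * (u + 2 * m)) ∧ Real.sqrt (u * (u + 2 * m)) ≤ u + m := by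
  constructor
  · nth_rewrite 1 [show u = Real.sqrt (u * u) from (Real.sqrt_mul_self hu).symm]
    exact Real.sqrt_le_sqrt (by nlinarith)
  · calc Real.sqrt (u * (u + 2 * m)) ≤ Real.sqrt ((u + m)^2) := Real.sqrt_le_sqrt (by nlinarith)
      _ = u + m := Real.sqrt_sq (by linarith)

private lemma intL (lam : EuclideanSpace ℝ (Fin 3) → ℝ) (hlam_cont : Continuous lam)
    (hlam_bd : ∀ k, 0 ≤ lam k ∧ lam k ≤ lam 0)
    (β x α : ℝ) (hβ : 0 < β) (hx : 0 ≤ x) (hα : α ≤ 0) :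
    Integrable (fun k : EuclideanSpace ℝ (Fin 3) =>
      Real.log (1 - Real.exp (-(β * Real.sqrt ((eps k - α) * (eps k - α + 2 * x * lam k)))))) volume := by
  have hscont : Continuous (fun k : EuclideanSpace ℝ (Fin 3) =>
      Real.sqrt ((eps k - α) * (eps k - α + 2 * x * lam k))) :=
    (((eps_cont.sub continuous_const).mul
      ((eps_cont.sub continuous_const).add (continuous_const.mul hlam_cont : Continuous fun k => 2*x* lam k))).sqrt)
  have hmeas : AEStronglyMeasurable (fun k : EuclideanSpace ℝ (Fin 3) =>
      Real.log (1 - Real.exp (-(β * Real.sqrt ((eps k - α) * (eps k - α + 2 * x * lam k)))))) volume :=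
    (Measurable.log ((continuous_const.sub
      ((continuous_const.mul hscont : Continuous fun k => β * _).neg.rexp)).measurable)).aestronglyMeasurable
  -- generic pointwise facts
  have hfacts : ∀ k : EuclideanSpace ℝ (Fin 3),
      eps k ≤ Real.sqrt ((eps k - α) * (eps k - α + 2 * x * lam k)) := by
    intro k
    have hu : 0 ≤ eps k - α := by linarith [eps_nonneg k]
    have hm : 0 ≤ x * lam k := mul_nonneg hx (hlam_bd k).1
    have h := (s_bounds hu hm).1
    calc eps k ≤ eps k - α := by linarith
      _ ≤ Real.sqrt ((eps k - α) * (eps k - α + 2 * (x * lam k))) := h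
      _ = Real.sqrt ((eps k - α) * (eps k - α + 2 * x * lam k)) := by ring_nf
  rw [← integrableOn_univ, ← union_compl_self (ball (0 : EuclideanSpace ℝ (Fin 3)) 1)]
  have h0 : ∀ᵐ k : EuclideanSpace ℝ (Fin 3) ∂volume, k ≠ 0 := by
    simp [ae_iff, measure_singleton]
  refine IntegrableOn.union ?_ ?_
  · -- on the unit ball
    have hdom : IntegrableOn (fun k : EuclideanSpace ℝ (Fin 3) =>
        (β/2 + |Real.log (β/2)|) + 2 * ‖k‖ ^ (-(2:ℝ)))
        (ball (0 : EuclideanSpace ℝ (Fin 3)) 1) volume :=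
      (integrableOn_const measure_ball_lt_top.ne).add (singInt.const_mul 2)
    refine Integrable.mono' hdom hmeas.restrict ?_
    filter_upwards [ae_restrict_mem measurableSet_ball, ae_restrict_of_ae h0] with k hk hk0
    have hr0 : 0 < ‖k‖ := norm_pos_iff.2 hk0
    have hr1 : ‖k‖ < 1 := by simpa [dist_zero_right] using hk
    set s := Real.sqrt ((eps k - α) * (eps k - α + 2 * x * lam k)) with hs
    have hse : eps k ≤ s := hfacts k
    have hW : 0 < β * eps k := by
      unfold eps; positivity
    have hWle : β * eps k ≤ β / 2 := by
      have : eps k ≤ 1/2 := by unfold eps; nlinarith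
      nlinarith
    have hexp1 : Real.exp (-(β * s)) ≤ Real.exp (-(β * eps k)) := by
      apply Real.exp_le_exp.2
      have : β * eps k ≤ β * s := by nlinarith
      linarith
    have hlow : β * eps k * Real.exp (-(β/2)) ≤ 1 - Real.exp (-(β * s)) := by
      have h1 : 1 - Real.exp (-(β * eps k)) ≤ 1 - Real.exp (-(β * s)) := by linarith
      have h2 : β * eps k * Real.exp (-(β * eps k)) ≤ 1 - Real.exp (-(β * eps k)) := by
        have hle := Real.add_one_le_exp (β * eps k)
        have hexpid : Real.exp (-(β * eps k)) * Real.exp (β * eps k) = 1 := by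
          rw [← Real.exp_add]; simp
        nlinarith [mul_le_mul_of_nonneg_left hle (Real.exp_pos (-(β * eps k))).le]
      have h3 : Real.exp (-(β/2)) ≤ Real.exp (-(β * eps k)) := by
        apply Real.exp_le_exp.2; linarith
      nlinarith
    have hlowpos : 0 < β * eps k * Real.exp (-(β/2)) := by positivity
    have harg : 0 < 1 - Real.exp (-(β * s)) := lt_of_lt_of_le hlowpos hlow
    have hneg : Real.log (1 - Real.exp (-(β * s))) ≤ 0 :=
      Real.log_nonpos (by linarith [Real.exp_pos (-(β * s))]) (by linarith [Real.exp_pos (-(β * s))])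
    rw [Real.norm_eq_abs, abs_of_nonpos hneg]
    have hloglog : Real.log (β * eps k * Real.exp (-(β/2))) ≤ Real.log (1 - Real.exp (-(β * s))) :=
      Real.log_le_log hlowpos hlow
    have hsplit : Real.log (β * eps k * Real.exp (-(β/2)))
        = Real.log (β/2) + 2 * Real.log ‖k‖ + (-(β/2)) := by
      have h1 : β * eps k = (β/2) * ‖k‖^2 := by unfold eps; ring
      rw [h1, Real.log_mul (by positivity) (by positivity), Real.log_mul (by positivity)
        (by positivity), Real.log_exp, Real.log_pow]
      push_cast; ring
    have hlogr : -Real.log ‖k‖ ≤ ‖k‖⁻¹ := by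
      have := Real.log_le_sub_one_of_pos (inv_pos.2 hr0)
      rw [Real.log_inv] at this
      linarith [inv_pos.2 hr0]
    have hrinv : ‖k‖⁻¹ ≤ ‖k‖ ^ (-(2:ℝ)) := by
      have : ‖k‖ ^ (-(2:ℝ)) = (‖k‖^2)⁻¹ := by
        rw [Real.rpow_neg (norm_nonneg _), show ((2:ℝ)) = ((2:ℕ):ℝ) by norm_num,
          Real.rpow_natCast]
      rw [this]
      refine inv_anti₀ (by positivity) (by nlinarith)
    have habs : |Real.log (β/2)| ≥ -Real.log (β/2) := neg_le_abs _
    linarith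
  · -- off the unit ball
    have hdom : IntegrableOn (fun k : EuclideanSpace ℝ (Fin 3) =>
        (1 - Real.exp (-(β/2)))⁻¹ * Real.exp (-(β/2) * ‖k‖^2))
        (ball (0 : EuclideanSpace ℝ (Fin 3)) 1)ᶜ volume :=
      ((gaussInt (half_pos hβ)).const_mul _).integrableOn
    refine Integrable.mono' hdom hmeas.restrict ?_
    filter_upwards [ae_restrict_mem measurableSet_ball.compl] with k hk
    have hr1 : 1 ≤ ‖k‖ := by
      simp only [mem_compl_iff, mem_ball, dist_zero_right, not_lt] at hk
      exact hk
    set s := Real.sqrt ((eps k - α) * (eps k - α + 2 * x * lam k)) with hs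
    have hse : eps k ≤ s := hfacts k
    have hWge : β/2 ≤ β * eps k := by
      have : (1:ℝ)/2 ≤ eps k := by unfold eps; nlinarith
      nlinarith
    have hexp1 : Real.exp (-(β * s)) ≤ Real.exp (-(β * eps k)) := by
      apply Real.exp_le_exp.2
      have : β * eps k ≤ β * s := by nlinarith
      linarith
    have hexp2 : Real.exp (-(β * eps k)) ≤ Real.exp (-(β/2)) :=
      Real.exp_le_exp.2 (by linarith)
    have he2 : Real.exp (-(β/2)) < 1 := Real.exp_lt_one_iff.2 (by linarith)
    have harg : 0 < 1 - Real.exp (-(β * s)) := by linarith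
    have hneg : Real.log (1 - Real.exp (-(β * s))) ≤ 0 :=
      Real.log_nonpos (by linarith [Real.exp_pos (-(β * s))]) (by linarith [Real.exp_pos (-(β * s))])
    rw [Real.norm_eq_abs, abs_of_nonpos hneg]
    have harg' : 0 < 1 - Real.exp (-(β * eps k)) := by linarith
    have hstep1 : -Real.log (1 - Real.exp (-(β * s))) ≤ -Real.log (1 - Real.exp (-(β * eps k))) := by
      have := Real.log_le_log harg' (by linarith : 1 - Real.exp (-(β * eps k)) ≤ 1 - Real.exp (-(β * s)))
      linarith
    have hstep2 : -Real.log (1 - Real.exp (-(β * eps k)))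
        ≤ Real.exp (-(β * eps k)) / (1 - Real.exp (-(β * eps k))) := by
      have h := Real.log_le_sub_one_of_pos (inv_pos.2 harg')
      rw [Real.log_inv] at h
      have : (1 - Real.exp (-(β * eps k)))⁻¹ - 1
          = Real.exp (-(β * eps k)) / (1 - Real.exp (-(β * eps k))) := by
        field_simp
        ring
      linarith
    have h4 : 0 < 1 - Real.exp (-(β/2)) := by linarith
    have hstep3 : Real.exp (-(β * eps k)) / (1 - Real.exp (-(β * eps k)))
        ≤ (1 - Real.exp (-(β/2)))⁻¹ * Real.exp (-(β/2) * ‖k‖^2) := by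
      have heq : Real.exp (-(β * eps k)) = Real.exp (-(β/2) * ‖k‖^2) := by
        congr 1; unfold eps; ring
      rw [div_eq_mul_inv, heq, mul_comm]
      refine mul_le_mul_of_nonneg_right ?_ (Real.exp_pos _).le
      refine inv_anti₀ h4 ?_
      have h5 : (1:ℝ) ≤ ‖k‖^2 := by nlinarith [mul_le_mul hr1 hr1 zero_le_one (norm_nonneg k)]
      have : Real.exp (-(β/2) * ‖k‖^2) ≤ Real.exp (-(β/2)) :=
        Real.exp_le_exp.2 (by nlinarith [h5, hβ])
      linarith
    linarith

private lemma intM (lam : EuclideanSpace ℝ (Fin 3) → ℝ) (hlam_cont : Continuous lam)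
    (hlam_bd : ∀ k, 0 ≤ lam k ∧ lam k ≤ lam 0) (hlamL2 : MemLp lam 2 volume)
    (β x α : ℝ) (hβ : 0 < β) (hx : 0 ≤ x) (hα : α ≤ 0) :
    Integrable (fun k : EuclideanSpace ℝ (Fin 3) =>
      eps k - α + x * lam k - Real.sqrt ((eps k - α) * (eps k - α + 2 * x * lam k))) volume := by
  have hscont : Continuous (fun k : EuclideanSpace ℝ (Fin 3) =>
      Real.sqrt ((eps k - α) * (eps k - α + 2 * x * lam k))) :=
    (((eps_cont.sub continuous_const).mul
      ((eps_cont.sub continuous_const).add (continuous_const.mul hlam_cont : Continuous fun k => 2*x* lam k))).sqrt)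
  have hmeas : AEStronglyMeasurable (fun k : EuclideanSpace ℝ (Fin 3) =>
      eps k - α + x * lam k - Real.sqrt ((eps k - α) * (eps k - α + 2 * x * lam k))) volume :=
    (((eps_cont.sub continuous_const).add
        (continuous_const.mul hlam_cont : Continuous fun k => x * lam k)).sub
      hscont).aestronglyMeasurable
  -- pointwise facts
  have hfacts : ∀ k : EuclideanSpace ℝ (Fin 3),
      0 ≤ eps k - α + x * lam k - Real.sqrt ((eps k - α) * (eps k - α + 2 * x * lam k)) ∧
      (eps k - α + x * lam k - Real.sqrt ((eps k - α) * (eps k - α + 2 * x * lam k)))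
        * (2 * (eps k - α)) ≤ (x * lam k)^2 := by
    intro k
    have hu : 0 ≤ eps k - α := by linarith [eps_nonneg k]
    have hm : 0 ≤ x * lam k := mul_nonneg hx (hlam_bd k).1
    have h2m : (eps k - α) * (eps k - α + 2 * x * lam k)
        = (eps k - α) * (eps k - α + 2 * (x * lam k)) := by ring
    rw [h2m]
    obtain ⟨hge, hle⟩ := s_bounds hu hm
    have hnn : 0 ≤ (eps k - α) * (eps k - α + 2 * (x * lam k)) := by nlinarith
    have hsq : Real.sqrt ((eps k - α) * (eps k - α + 2 * (x * lam k))) ^ 2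
        = (eps k - α) * (eps k - α + 2 * (x * lam k)) := Real.sq_sqrt hnn
    constructor
    · linarith
    · nlinarith [mul_nonneg (sub_nonneg.2 hge)
        (sub_nonneg.2 hle : (0:ℝ) ≤ eps k - α + x * lam k - _),
        mul_nonneg hm (sub_nonneg.2 hle : (0:ℝ) ≤ eps k - α + x * lam k - _)]
  have hMle : ∀ k : EuclideanSpace ℝ (Fin 3),
      eps k - α + x * lam k - Real.sqrt ((eps k - α) * (eps k - α + 2 * x * lam k))
        ≤ x * lam k := by
    intro k
    have hu : 0 ≤ eps k - α := by linarith [eps_nonneg k]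
    have hm : 0 ≤ x * lam k := mul_nonneg hx (hlam_bd k).1
    have h2m : (eps k - α) * (eps k - α + 2 * x * lam k)
        = (eps k - α) * (eps k - α + 2 * (x * lam k)) := by ring
    rw [h2m]
    linarith [(s_bounds hu hm).1]
  rw [← integrableOn_univ, ← union_compl_self (ball (0 : EuclideanSpace ℝ (Fin 3)) 1)]
  have h0 : ∀ᵐ k : EuclideanSpace ℝ (Fin 3) ∂volume, k ≠ 0 := by
    simp [ae_iff, measure_singleton]
  refine IntegrableOn.union ?_ ?_
  · -- on the ball
    have hdom : IntegrableOn (fun k : EuclideanSpace ℝ (Fin 3) =>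
        (x * lam 0)^2 * ‖k‖ ^ (-(2:ℝ))) (ball (0 : EuclideanSpace ℝ (Fin 3)) 1) volume :=
      singInt.const_mul _
    refine Integrable.mono' hdom hmeas.restrict ?_
    filter_upwards [ae_restrict_of_ae h0] with k hk0
    have hr0 : 0 < ‖k‖ := norm_pos_iff.2 hk0
    have he0 : 0 < eps k := by unfold eps; positivity
    obtain ⟨hM0, hMq⟩ := hfacts k
    rw [Real.norm_eq_abs, abs_of_nonneg hM0]
    have hrp : ‖k‖ ^ (-(2:ℝ)) = (‖k‖^2)⁻¹ := by
      rw [Real.rpow_neg (norm_nonneg _), show ((2:ℝ)) = ((2:ℕ):ℝ) by norm_num,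
        Real.rpow_natCast]
    have h2u : ‖k‖^2 ≤ 2 * (eps k - α) := by unfold eps; nlinarith
    have hstep : eps k - α + x * lam k - Real.sqrt ((eps k - α) * (eps k - α + 2 * x * lam k))
        ≤ (x * lam k)^2 / ‖k‖^2 := by
      rw [le_div_iff₀ (by positivity)]
      calc (eps k - α + x * lam k - _) * ‖k‖^2 ≤ (eps k - α + x * lam k - _) * (2 * (eps k - α)) :=
            mul_le_mul_of_nonneg_left h2u hM0
        _ ≤ (x * lam k)^2 := hMq
    have hlam2 : (x * lam k)^2 ≤ (x * lam 0)^2 := by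
      have h1 := (hlam_bd k).1
      have h2 := (hlam_bd k).2
      nlinarith [mul_le_mul_of_nonneg_left (mul_le_mul h2 h2 h1 (hlam_bd 0).1) (sq_nonneg x)]
    calc eps k - α + x * lam k - _ ≤ (x * lam k)^2 / ‖k‖^2 := hstep
      _ ≤ (x * lam 0)^2 / ‖k‖^2 := by gcongr
      _ = (x * lam 0)^2 * ‖k‖ ^ (-(2:ℝ)) := by rw [hrp, div_eq_mul_inv]
  · -- off the ball
    have h2' := hlamL2.integrable_norm_rpow (by norm_num) (by norm_num)
    simp only [ENNReal.toReal_ofNat] at h2'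
    have hint2 := (h2'.const_mul (x^2)).integrableOn
      (s := (ball (0 : EuclideanSpace ℝ (Fin 3)) 1)ᶜ)
    refine Integrable.mono' hint2 hmeas.restrict ?_
    filter_upwards [ae_restrict_mem measurableSet_ball.compl] with k hk
    have hr1 : 1 ≤ ‖k‖ := by
      simp only [mem_compl_iff, mem_ball, dist_zero_right, not_lt] at hk
      exact hk
    obtain ⟨hM0, hMq⟩ := hfacts k
    rw [Real.norm_eq_abs, abs_of_nonneg hM0]
    have h2u : (1:ℝ) ≤ 2 * (eps k - α) := by
      have : (1:ℝ) ≤ ‖k‖^2 := by nlinarith [mul_le_mul hr1 hr1 zero_le_one (norm_nonneg k)]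
      unfold eps; nlinarith
    have hM1 : eps k - α + x * lam k - Real.sqrt ((eps k - α) * (eps k - α + 2 * x * lam k))
        ≤ (x * lam k)^2 := by nlinarith
    have hre : ‖lam k‖ ^ (2:ℝ) = (lam k)^2 := by
      rw [show ((2:ℝ)) = ((2:ℕ):ℝ) by norm_num, Real.rpow_natCast, Real.norm_eq_abs, sq_abs]
    rw [hre]
    nlinarith [hM1]

private lemma convexOn_integral {f : ℝ → EuclideanSpace ℝ (Fin 3) → ℝ} {s : Set ℝ}
    (hs : Convex ℝ s) (hint : ∀ a ∈ s, Integrable (f a) volume)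
    (hconv : ∀ᵐ k : EuclideanSpace ℝ (Fin 3) ∂volume, ConvexOn ℝ s (fun a => f a k)) :
    ConvexOn ℝ s (fun a => ∫ k, f a k) := by
  refine ⟨hs, fun a ha b hb p q hp hq hpq => ?_⟩
  have hmem : p • a + q • b ∈ s := hs ha hb hp hq hpq
  have h1 : (∫ k, f (p • a + q • b) k) ≤ ∫ k, (p * f a k + q * f b k) := by
    refine integral_mono_ae (hint _ hmem)
      (((hint a ha).const_mul p).add ((hint b hb).const_mul q)) ?_
    filter_upwards [hconv] with k hk
    simpa [smul_eq_mul] using hk.2 ha hb hp hq hpq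
  have h2 : (∫ k, (p * f a k + q * f b k))
      = p * (∫ k, f a k) + q * (∫ k, f b k) := by
    rw [integral_add ((hint a ha).const_mul p) ((hint b hb).const_mul q),
      integral_const_mul, integral_const_mul]
  simpa [smul_eq_mul] using h1.trans_eq h2


end Aux

/-- for fixed `β > 0` and `x ≥ 0`, the map `α ↦ p₀ᴮ(β,α,x)` is convex
on the half-line `(−∞,0]`. -/
theorem stmt_2 (lam : EuclideanSpace ℝ (Fin 3) → ℝ)
    (hlam_cont : Continuous lam) (hlam0 : 0 < lam 0)
    (hlam_bd : ∀ k, 0 ≤ lam k ∧ lam k ≤ lam 0) (hlamL2 : MemLp lam 2 volume)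
    (β x : ℝ) (hβ : 0 < β) (hx : 0 ≤ x) :
    ConvexOn ℝ (Set.Iic (0 : ℝ)) (fun α => p0B lam β α x) := by
  set G : ℝ → EuclideanSpace ℝ (Fin 3) → ℝ := fun α k =>
    -(1/β) * Real.log (1 - Real.exp (-(β * Real.sqrt ((eps k - α) * (eps k - α + 2 * x * lam k)))))
    + (1/2) * (eps k - α + x * lam k - Real.sqrt ((eps k - α) * (eps k - α + 2 * x * lam k)))
    with hG
  have hGint : ∀ α ∈ Iic (0:ℝ), Integrable (G α) volume := by
    intro α hα
    exact ((intL lam hlam_cont hlam_bd β x α hβ hx hα).const_mul (-(1/β))).add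
      ((intM lam hlam_cont hlam_bd hlamL2 β x α hβ hx hα).const_mul (1/2))
  have hp0B : ∀ α ∈ Iic (0:ℝ), p0B lam β α x = α * x + ((2*π)^3)⁻¹ * ∫ k, G α k := by
    intro α hα
    have hsplit : (∫ k, G α k)
        = -(1/β) * (∫ k : EuclideanSpace ℝ (Fin 3),
            Real.log (1 - Real.exp (-(β * Real.sqrt ((eps k - α) * (eps k - α + 2 * x * lam k))))))
          + (1/2) * (∫ k : EuclideanSpace ℝ (Fin 3),
            (eps k - α + x * lam k - Real.sqrt ((eps k - α) * (eps k - α + 2 * x * lam k)))) := by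
      rw [hG]
      rw [integral_add ((intL lam hlam_cont hlam_bd β x α hβ hx hα).const_mul (-(1/β)))
        ((intM lam hlam_cont hlam_bd hlamL2 β x α hβ hx hα).const_mul (1/2)),
        integral_const_mul, integral_const_mul]
    rw [hsplit, p0B, mul_inv, mul_inv]
    ring
  have h0 : ∀ᵐ k : EuclideanSpace ℝ (Fin 3) ∂volume, k ≠ 0 := by
    simp [ae_iff, measure_singleton]
  have hae : ∀ᵐ k : EuclideanSpace ℝ (Fin 3) ∂volume, ConvexOn ℝ (Iic (0:ℝ)) (fun α => G α k) := by
    filter_upwards [h0] with k hk0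
    have ht : 0 < eps k := by
      unfold eps
      have : 0 < ‖k‖ := norm_pos_iff.2 hk0
      positivity
    have hm : 0 ≤ x * lam k := mul_nonneg hx (hlam_bd k).1
    have h := Gconv β (eps k) (x * lam k) hβ ht hm
    rw [hG]
    simpa only [← mul_assoc] using h
  have hconvInt : ConvexOn ℝ (Iic (0:ℝ)) (fun α => ∫ k, G α k) :=
    convexOn_integral (convex_Iic 0) hGint hae
  have hlin : ConvexOn ℝ (Iic (0:ℝ)) (fun α : ℝ => α * x) := by
    refine ⟨convex_Iic 0, fun a _ b _ p q hp hq hpq => ?_⟩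
    simp only [smul_eq_mul]
    exact le_of_eq (by ring)
  have hsum := hlin.add (hconvInt.smul (by positivity : (0:ℝ) ≤ ((2*π)^3)⁻¹))
  refine ⟨convex_Iic 0, fun a ha b hb p q hp hq hpq => ?_⟩
  have hmem : p • a + q • b ∈ Iic (0:ℝ) := (convex_Iic 0) ha hb hp hq hpq
  simp only [hp0B _ hmem, hp0B a ha, hp0B b hb]
  have := hsum.2 ha hb hp hq hpq
  simpa [smul_eq_mul, mul_add, mul_comm, mul_left_comm] using this
end

section
/- (Minimax exchange.) Fix β > 0, x ≥ 0, μ ∈ ℝ and λ₀ > 0, and define Ψ(y,α) := α(y + x) − f₀ᴮ(β,y,x) + (μ − α)²/(2λ₀) for y ≥ 0 and α ≤ 0. Then Ψ is concave in y for each fixed α, strictly convex in α for each fixed y, and the infimum over α ≤ 0 and the supremum over y ≥ 0 commute: inf_{α ≤ 0} sup_{y ≥ 0} Ψ(y,α) = sup_{y ≥ 0} inf_{α ≤ 0} Ψ(y,α). -/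
open MeasureTheory Real Filter Set

/-- The function `Ψ(y,α) := α(y+x) − f₀ᴮ(β,y,x) + (μ−α)²/(2λ₀)` with `λ₀ = λ(0)`. -/
noncomputable def Psi (lam : EuclideanSpace ℝ (Fin 3) → ℝ) (β x μ y α : ℝ) : ℝ :=
  α * (y + x) - f0B lam β y x + (μ - α) ^ 2 / (2 * lam 0)



noncomputable def gaux (L x μ y : ℝ) : ℝ := max (L * (x + y) - μ) 0
noncomputable def maux (L x μ y : ℝ) : ℝ := (μ ^ 2 - (gaux L x μ y) ^ 2) / (2 * L)

lemma gaux_nonneg (L x μ y : ℝ) : 0 ≤ gaux L x μ y := le_max_right _ _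
lemma gaux_ge (L x μ y : ℝ) : L * (x + y) - μ ≤ gaux L x μ y := le_max_left _ _

lemma mauxM1 (L x μ : ℝ) (hL : 0 < L) (y α : ℝ) (hα : α ≤ 0) :
    maux L x μ y ≤ α * (y + x) + (μ - α) ^ 2 / (2 * L) := by
  have h2L : (0:ℝ) < 2 * L := by linarith
  have key : μ ^ 2 - (gaux L x μ y) ^ 2 ≤ α * (y + x) * (2 * L) + (μ - α) ^ 2 := by
    unfold gaux
    rcases le_total (L * (x + y) - μ) 0 with hb | hb
    · rw [max_eq_right hb]
      nlinarith [mul_nonneg (neg_nonneg.2 hα) (neg_nonneg.2 hb)]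
    · rw [max_eq_left hb]
      nlinarith [sq_nonneg (α + (L * (x + y) - μ))]
  have e : α * (y + x) + (μ - α) ^ 2 / (2 * L)
      = (α * (y + x) * (2 * L) + (μ - α) ^ 2) / (2 * L) := by field_simp
  rw [e, maux, div_le_div_iff_of_pos_right h2L]
  exact key

lemma mauxM2 (L x μ : ℝ) (hL : 0 < L) (y : ℝ) :
    (-(gaux L x μ y)) * (y + x) + (μ - (-(gaux L x μ y))) ^ 2 / (2 * L) = maux L x μ y := by
  have h2L : (2 * L) ≠ 0 := by positivity
  unfold maux gaux
  rcases le_total (L * (x + y) - μ) 0 with hb | hb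
  · rw [max_eq_right hb]; field_simp; ring
  · rw [max_eq_left hb]; field_simp; ring

lemma mauxM3 (L x μ : ℝ) (hL : 0 < L) (y z : ℝ) :
    maux L x μ y + (-(gaux L x μ y)) * (z - y) - L / 2 * (z - y) ^ 2 ≤ maux L x μ z := by
  have h2L : (0:ℝ) < 2 * L := by linarith
  have h1 := gaux_nonneg L x μ y; have h2 := gaux_nonneg L x μ z
  have h3 := gaux_ge L x μ y; have h4 := gaux_ge L x μ z
  have key : (μ ^ 2 - gaux L x μ y ^ 2) + ((-(gaux L x μ y)) * (z - y) - L / 2 * (z - y) ^ 2) * (2 * L)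
      ≤ μ ^ 2 - gaux L x μ z ^ 2 := by
    have hup : gaux L x μ z ≤ gaux L x μ y + L * (z - y) ∨ gaux L x μ z = 0 := by
      rcases le_total (L * (x + z) - μ) 0 with hb | hb
      · exact Or.inr (max_eq_right hb)
      · left
        have hz : gaux L x μ z = L * (x + z) - μ := max_eq_left hb
        rw [hz]; nlinarith
    rcases hup with hup | hup
    · nlinarith [sq_nonneg (gaux L x μ y + L * (z - y) - gaux L x μ z)]
    · rw [hup]; nlinarith [sq_nonneg (gaux L x μ y + L * (z - y))]
  have e1 : maux L x μ y + (-(gaux L x μ y)) * (z - y) - L / 2 * (z - y) ^ 2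
      = ((μ ^ 2 - gaux L x μ y ^ 2) + ((-(gaux L x μ y)) * (z - y) - L / 2 * (z - y) ^ 2) * (2 * L)) / (2 * L) := by
    unfold maux; field_simp; ring
  rw [e1, maux, div_le_div_iff_of_pos_right h2L]
  exact key

set_option maxHeartbeats 1000000 in
lemma core_minimax (L x μ h0 : ℝ) (hL : 0 < L) (hx : 0 ≤ x) (f : ℝ → ℝ)
    (hf1 : ∀ y, 0 ≤ y → f y ≤ 0) (hf2 : ∀ y, 0 ≤ y → h0 ≤ f y)
    (hf3 : ∀ a, 0 ≤ a → ∀ b, 0 ≤ b → ∀ ta tb : ℝ, 0 ≤ ta → 0 ≤ tb → ta + tb = 1 →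
      f (ta * a + tb * b) ≤ ta * f a + tb * f b) :
    sInf {v : ℝ | ∃ α ≤ (0:ℝ), v = sSup {w : ℝ | ∃ y ≥ (0:ℝ),
        w = α * (y + x) - f y + (μ - α) ^ 2 / (2 * L)}}
      = sSup {v : ℝ | ∃ y ≥ (0:ℝ), v = sInf {w : ℝ | ∃ α ≤ (0:ℝ),
        w = α * (y + x) - f y + (μ - α) ^ 2 / (2 * L)}} := by
  have h2L : (0:ℝ) < 2 * L := by linarith
  have hh0 : h0 ≤ 0 := le_trans (hf2 0 le_rfl) (hf1 0 le_rfl)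
  -- inner infimum equals maux - f
  have hG : ∀ y, 0 ≤ y → sInf {w : ℝ | ∃ α ≤ (0:ℝ),
      w = α * (y + x) - f y + (μ - α) ^ 2 / (2 * L)} = maux L x μ y - f y := by
    intro y hy
    apply le_antisymm
    · apply csInf_le
      · exact ⟨maux L x μ y - f y, by
          rintro w ⟨α, hα, rfl⟩
          have := mauxM1 L x μ hL y α hα; linarith⟩
      · refine ⟨-(gaux L x μ y), by simpa using gaux_nonneg L x μ y, ?_⟩
        have := mauxM2 L x μ hL y; linarith
    · refine le_csInf ⟨_, ⟨0, le_rfl, rfl⟩⟩ ?_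
      rintro w ⟨α, hα, rfl⟩
      have := mauxM1 L x μ hL y α hα; linarith
  -- rewrite the RHS set
  have hsetR : {v : ℝ | ∃ y ≥ (0:ℝ), v = sInf {w : ℝ | ∃ α ≤ (0:ℝ),
      w = α * (y + x) - f y + (μ - α) ^ 2 / (2 * L)}}
      = {v : ℝ | ∃ y ≥ (0:ℝ), v = maux L x μ y - f y} := by
    ext v; constructor
    · rintro ⟨y, hy, rfl⟩; exact ⟨y, hy, (hG y hy)⟩
    · rintro ⟨y, hy, rfl⟩; exact ⟨y, hy, (hG y hy).symm⟩
  rw [hsetR]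
  obtain ⟨S, hS_def⟩ : ∃ a : ℝ, a = sSup {v : ℝ | ∃ y ≥ (0:ℝ), v = maux L x μ y - f y} :=
    ⟨_, rfl⟩
  rw [← hS_def]
  have hmub : ∀ y : ℝ, maux L x μ y ≤ μ ^ 2 / (2 * L) := by
    intro y
    have : μ ^ 2 - gaux L x μ y ^ 2 ≤ μ ^ 2 := by nlinarith [gaux_nonneg L x μ y]
    have h2 := (div_le_div_iff_of_pos_right h2L).mpr this
    simpa [maux] using h2
  have hSetNe : {v : ℝ | ∃ y ≥ (0:ℝ), v = maux L x μ y - f y}.Nonempty :=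
    ⟨maux L x μ 0 - f 0, 0, le_rfl, rfl⟩
  have hSetBdd : BddAbove {v : ℝ | ∃ y ≥ (0:ℝ), v = maux L x μ y - f y} := by
    refine ⟨μ ^ 2 / (2 * L) - h0, ?_⟩
    rintro v ⟨y, hy, rfl⟩
    have := hf2 y hy; have := hmub y
    linarith
  have hGleS : ∀ y, 0 ≤ y → maux L x μ y - f y ≤ S := fun y hy => by
    rw [hS_def]; exact le_csSup hSetBdd ⟨y, hy, rfl⟩
  -- bounds for the Ψ-in-y sets
  have hFbdd : ∀ α : ℝ, α ≤ 0 → BddAbove {w : ℝ | ∃ y ≥ (0:ℝ),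
      w = α * (y + x) - f y + (μ - α) ^ 2 / (2 * L)} := by
    intro α hα
    refine ⟨α * x + (μ - α) ^ 2 / (2 * L) - h0, ?_⟩
    rintro w ⟨y, hy, rfl⟩
    have h1 := hf2 y hy
    have h2 : α * y ≤ 0 := mul_nonpos_of_nonpos_of_nonneg hα hy
    nlinarith
  have hFne : ∀ α : ℝ, {w : ℝ | ∃ y ≥ (0:ℝ),
      w = α * (y + x) - f y + (μ - α) ^ 2 / (2 * L)}.Nonempty :=
    fun α => ⟨_, ⟨0, le_rfl, rfl⟩⟩
  -- F α := the inner sup; lower bounds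
  have hGF : ∀ y, 0 ≤ y → ∀ α, α ≤ 0 → maux L x μ y - f y ≤ sSup {w : ℝ | ∃ y ≥ (0:ℝ),
      w = α * (y + x) - f y + (μ - α) ^ 2 / (2 * L)} := by
    intro y hy α hα
    have h1 := mauxM1 L x μ hL y α hα
    have h2 : α * (y + x) - f y + (μ - α) ^ 2 / (2 * L) ≤ sSup {w : ℝ | ∃ y ≥ (0:ℝ),
        w = α * (y + x) - f y + (μ - α) ^ 2 / (2 * L)} := le_csSup (hFbdd α hα) ⟨y, hy, rfl⟩
    linarith
  have hLne : {v : ℝ | ∃ α ≤ (0:ℝ), v = sSup {w : ℝ | ∃ y ≥ (0:ℝ),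
      w = α * (y + x) - f y + (μ - α) ^ 2 / (2 * L)}}.Nonempty := ⟨_, ⟨0, le_rfl, rfl⟩⟩
  have hLbdd : BddBelow {v : ℝ | ∃ α ≤ (0:ℝ), v = sSup {w : ℝ | ∃ y ≥ (0:ℝ),
      w = α * (y + x) - f y + (μ - α) ^ 2 / (2 * L)}} := by
    refine ⟨maux L x μ 0 - f 0, ?_⟩
    rintro v ⟨α, hα, rfl⟩
    exact hGF 0 le_rfl α hα
  -- easy direction
  have easy : S ≤ sInf {v : ℝ | ∃ α ≤ (0:ℝ), v = sSup {w : ℝ | ∃ y ≥ (0:ℝ),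
      w = α * (y + x) - f y + (μ - α) ^ 2 / (2 * L)}} := by
    refine le_csInf hLne ?_
    rintro v ⟨α, hα, rfl⟩
    rw [hS_def]
    refine csSup_le hSetNe ?_
    rintro w ⟨y, hy, rfl⟩
    exact hGF y hy α hα
  -- hard direction
  have hard : sInf {v : ℝ | ∃ α ≤ (0:ℝ), v = sSup {w : ℝ | ∃ y ≥ (0:ℝ),
      w = α * (y + x) - f y + (μ - α) ^ 2 / (2 * L)}} ≤ S := by
    apply le_of_forall_pos_le_add
    intro ε hε
    obtain ⟨K, hK_def⟩ : ∃ a : ℝ, a = max (μ ^ 2 / (2 * L) + 1 - S - h0) 0 := ⟨_, rfl⟩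
    have hK : 0 ≤ K := hK_def ▸ le_max_right _ _
    have hKge : μ ^ 2 / (2 * L) + 1 - S - h0 ≤ K := hK_def ▸ le_max_left _ _
    obtain ⟨ρ, hρ_def⟩ : ∃ a : ℝ, a = Real.sqrt (2 * L * K) := ⟨_, rfl⟩
    have hρ : 0 ≤ ρ := hρ_def ▸ Real.sqrt_nonneg _
    have hρsq : ρ ^ 2 = 2 * L * K := by rw [hρ_def]; exact Real.sq_sqrt (by positivity)
    obtain ⟨Y, hY_def⟩ : ∃ a : ℝ, a = (ρ + |μ|) / L := ⟨_, rfl⟩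
    have hY : 0 ≤ Y := by rw [hY_def]; positivity
    obtain ⟨C, hC_def⟩ : ∃ a : ℝ, a = 2 * Y + 2 + (|μ| + ρ) / L + 1 / (2 * L) := ⟨_, rfl⟩
    have hC : 0 < C := by
      rw [hC_def]
      have : (0:ℝ) < 1 / (2 * L) := by positivity
      have : (0:ℝ) ≤ (|μ| + ρ) / L := by positivity
      linarith
    obtain ⟨σ, hσ_def⟩ : ∃ a : ℝ, a = min 1 (ε / C) := ⟨_, rfl⟩
    have hσ : 0 < σ := hσ_def ▸ lt_min one_pos (by positivity)
    have hσ1 : σ ≤ 1 := hσ_def ▸ min_le_left _ _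
    have hσε : σ * C ≤ ε := by
      have h1 : σ ≤ ε / C := hσ_def ▸ min_le_right _ _
      calc σ * C ≤ (ε / C) * C := mul_le_mul_of_nonneg_right h1 hC.le
        _ = ε := by field_simp
    obtain ⟨δ, hδ_def⟩ : ∃ a : ℝ, a = min σ (σ ^ 2 / (2 * L * (Y + 1))) := ⟨_, rfl⟩
    have hδpos : 0 < δ := hδ_def ▸ lt_min hσ (by positivity)
    have hδσ : δ ≤ σ := hδ_def ▸ min_le_left _ _
    have hδq : δ * (2 * L * (Y + 1)) ≤ σ ^ 2 := by
      rw [hδ_def]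
      exact (le_div_iff₀ (by positivity)).1 (min_le_right σ _)
    -- pick an approximate maximizer y*
    obtain ⟨v, hv_mem, hvS⟩ := exists_lt_of_lt_csSup hSetNe
      (show S - δ < sSup {v : ℝ | ∃ y ≥ (0:ℝ), v = maux L x μ y - f y} by
        rw [← hS_def]; linarith)
    obtain ⟨ys, hys, rfl⟩ := hv_mem
    have hm_big : S - δ < maux L x μ ys - f ys := hvS
    have hgs0 : 0 ≤ gaux L x μ ys := gaux_nonneg _ _ _ _
    have hfys : h0 ≤ f ys := hf2 ys hys
    have hm_big2 : S - 1 + h0 < maux L x μ ys := by linarith only [hm_big, hδσ, hσ1, hfys]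
    have hgs_sq : gaux L x μ ys ^ 2 < 2 * L * K := by
      have e0 : maux L x μ ys = (μ ^ 2 - gaux L x μ ys ^ 2) / (2 * L) := rfl
      have e1 : (S - 1 + h0) * (2 * L) < μ ^ 2 - gaux L x μ ys ^ 2 := by
        rw [e0] at hm_big2; exact (lt_div_iff₀ h2L).1 hm_big2
      have e2 : 2 * L * (μ ^ 2 / (2 * L) + 1 - S - h0) = μ ^ 2 - (S - 1 + h0) * (2 * L) := by
        field_simp; ring
      have e3 : 2 * L * (μ ^ 2 / (2 * L) + 1 - S - h0) ≤ 2 * L * K :=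
        mul_le_mul_of_nonneg_left hKge h2L.le
      linarith only [e1, e2, e3]
    have hgsρ : gaux L x μ ys ≤ ρ := by
      nlinarith only [hρsq, hgs_sq, hgs0, hρ, sq_nonneg (gaux L x μ ys - ρ), sq_nonneg (gaux L x μ ys + ρ)]
    have hysY : ys ≤ Y := by
      have h4 := gaux_ge L x μ ys
      have h5 : L * ys ≤ ρ + |μ| := by
        linarith only [h4, hgsρ, le_abs_self μ, mul_nonneg hL.le hx]
      rw [hY_def, le_div_iff₀ hL]; linarith only [h5]
    obtain ⟨αs, hαs_def⟩ : ∃ a : ℝ, a = -(gaux L x μ ys) := ⟨_, rfl⟩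
    have hαs : αs ≤ 0 := by rw [hαs_def]; linarith
    have hαsρ : -ρ ≤ αs := by rw [hαs_def]; linarith
    have hms : αs * (ys + x) + (μ - αs) ^ 2 / (2 * L) = maux L x μ ys := by
      rw [hαs_def]; exact mauxM2 L x μ hL ys
    -- quadratic lower support with slack δ
    have step2 : ∀ z, 0 ≤ z → f ys + αs * (z - ys) - L / 2 * (z - ys) ^ 2 - δ ≤ f z := by
      intro z hz
      have h1 : maux L x μ z - f z ≤ S := hGleS z hz
      have h3 := mauxM3 L x μ hL ys z
      rw [← hαs_def] at h3
      linarith only [h1, h3, hm_big]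
    -- chord inequality (multiplied by t)
    have step3 : ∀ z, 0 ≤ z → ∀ t : ℝ, 0 < t → t ≤ 1 →
        t * f ys + t * (αs * (z - ys)) - L / 2 * t ^ 2 * (z - ys) ^ 2 - δ ≤ t * f z := by
      intro z hz t ht0 ht1
      have hw : 0 ≤ (1 - t) * ys + t * z := by
        have h6 := mul_nonneg (by linarith : (0:ℝ) ≤ 1 - t) hys
        have h7 := mul_nonneg ht0.le hz
        linarith
      have hchord := hf3 ys hys z hz (1 - t) t (by linarith) ht0.le (by ring)
      have hsup := step2 ((1 - t) * ys + t * z) hw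
      have he : (1 - t) * ys + t * z - ys = t * (z - ys) := by ring
      rw [he] at hsup
      linarith only [hsup, hchord]
    obtain ⟨αh, hαh_def⟩ : ∃ a : ℝ, a = αs - σ := ⟨_, rfl⟩
    have hαh : αh ≤ 0 := by rw [hαh_def]; linarith
    -- linear lower support with slack σ(2Y+1)
    have step4 : ∀ z, 0 ≤ z → f ys + αh * (z - ys) - σ * (2 * Y + 1) ≤ f z := by
      intro z hz
      have hδ2L : δ * (2 * L) ≤ σ ^ 2 := by
        have h6 : 0 ≤ δ * (2 * L) * Y := by positivity
        linarith only [hδq, h6]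
      have key : ∃ t : ℝ, 0 < t ∧ t ≤ 1 ∧
          L / 2 * t ^ 2 * (z - ys) ^ 2 + δ ≤ t * σ * (z - ys) + t * σ * (2 * Y + 1) := by
        rcases le_or_gt ys z with hzy | hzy
        · -- d = z - ys ≥ 0
          have hd : 0 ≤ z - ys := by linarith
          have hu : 0 < L * (z - ys + 1) := mul_pos hL (by linarith)
          refine ⟨min 1 (σ / (L * (z - ys + 1))), lt_min one_pos (div_pos hσ hu),
            min_le_left _ _, ?_⟩
          rcases min_cases 1 (σ / (L * (z - ys + 1))) with ⟨hmin, hge⟩ | ⟨hmin, hge⟩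
          · rw [hmin]
            have hLd : L * (z - ys + 1) ≤ σ := by
              have := (le_div_iff₀ hu).1 hge; linarith only [this]
            have p1 : L * (z - ys + 1) * (z - ys) ≤ σ * (z - ys) :=
              mul_le_mul_of_nonneg_right hLd hd
            have p2 : 0 ≤ L * (z - ys) ^ 2 := by positivity
            have p3 : 0 ≤ L * (z - ys) := mul_nonneg hL.le hd
            have p4 : 0 ≤ σ * Y := mul_nonneg hσ.le hY
            linarith only [p1, p2, p3, p4, hδσ]
          · obtain ⟨t, ht_def⟩ : ∃ a : ℝ, a = σ / (L * (z - ys + 1)) := ⟨_, rfl⟩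
            have ht0 : 0 < t := by rw [ht_def]; exact div_pos hσ hu
            rw [hmin, ← ht_def]
            have hσeq : t * (L * (z - ys + 1)) = σ := by
              rw [ht_def]; exact div_mul_cancel₀ σ hu.ne'
            have f1 : t * σ * (z - ys) = t ^ 2 * L * (z - ys) ^ 2 + t ^ 2 * L * (z - ys) := by
              rw [← hσeq]; ring
            have f2 : t * σ * (2 * Y + 1)
                = 2 * (t ^ 2 * L * (z - ys + 1) * Y) + t ^ 2 * L * (z - ys) + t ^ 2 * L := by
              rw [← hσeq]; ring
            have f5 : δ ≤ t ^ 2 * L * (z - ys + 1) ^ 2 / 2 := by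
              have h8 : δ * (2 * L) ≤ (t ^ 2 * L * (z - ys + 1) ^ 2 / 2) * (2 * L) := by
                calc δ * (2 * L) ≤ σ ^ 2 := hδ2L
                  _ = (t ^ 2 * L * (z - ys + 1) ^ 2 / 2) * (2 * L) := by
                      rw [← hσeq]; ring
              exact le_of_mul_le_mul_right h8 h2L
            have p1 : 0 ≤ t ^ 2 * L := by positivity
            have p2 : 0 ≤ t ^ 2 * L * (z - ys) := mul_nonneg p1 hd
            have p3 : 0 ≤ t ^ 2 * L * (z - ys + 1) * Y :=
              mul_nonneg (mul_nonneg p1 (by linarith)) hY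
            linarith only [f1, f2, f5, p1, p2, p3]
        · -- d = z - ys < 0, |d| ≤ Y
          have hdY : -(Y) ≤ z - ys := by linarith
          have hd0 : z - ys ≤ 0 := by linarith
          have hu : 0 < L * (Y + 1) := mul_pos hL (by linarith)
          refine ⟨min 1 (σ / (L * (Y + 1))), lt_min one_pos (div_pos hσ hu),
            min_le_left _ _, ?_⟩
          have hdsq : (z - ys) ^ 2 ≤ Y ^ 2 := by nlinarith only [hdY, hd0, hY]
          rcases min_cases 1 (σ / (L * (Y + 1))) with ⟨hmin, hge⟩ | ⟨hmin, hge⟩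
          · rw [hmin]
            have hLd : L * (Y + 1) ≤ σ := by
              have := (le_div_iff₀ hu).1 hge; linarith only [this]
            have p1 : σ * (-(Y)) ≤ σ * (z - ys) := mul_le_mul_of_nonneg_left hdY hσ.le
            have p2 : L * (Y + 1) * Y ≤ σ * Y := mul_le_mul_of_nonneg_right hLd hY
            have p3 : L * (z - ys) ^ 2 ≤ L * Y ^ 2 := mul_le_mul_of_nonneg_left hdsq hL.le
            have p4 : 0 ≤ L * Y := mul_nonneg hL.le hY
            have p6 : 0 ≤ σ * Y := mul_nonneg hσ.le hY
            linarith only [p1, p2, p3, p4, p6, hδσ]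
          · obtain ⟨t, ht_def⟩ : ∃ a : ℝ, a = σ / (L * (Y + 1)) := ⟨_, rfl⟩
            have ht0 : 0 < t := by rw [ht_def]; exact div_pos hσ hu
            rw [hmin, ← ht_def]
            have hσeq : t * (L * (Y + 1)) = σ := by
              rw [ht_def]; exact div_mul_cancel₀ σ hu.ne'
            have f1 : t * σ * (z - ys) = t ^ 2 * L * (Y + 1) * (z - ys) := by
              rw [← hσeq]; ring
            have f2 : t * σ * (2 * Y + 1) = t ^ 2 * L * (Y + 1) * (2 * Y + 1) := by
              rw [← hσeq]; ring
            have hu2 : 0 < 2 * L * (Y + 1) := by linarith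
            have f5 : δ ≤ t ^ 2 * L * (Y + 1) / 2 := by
              have h8 : δ * (2 * L * (Y + 1)) ≤ (t ^ 2 * L * (Y + 1) / 2) * (2 * L * (Y + 1)) := by
                calc δ * (2 * L * (Y + 1)) ≤ σ ^ 2 := hδq
                  _ = (t ^ 2 * L * (Y + 1) / 2) * (2 * L * (Y + 1)) := by
                      rw [← hσeq]; ring
              exact le_of_mul_le_mul_right h8 hu2
            have p1 : 0 ≤ t ^ 2 * L := by positivity
            have p2 : t ^ 2 * L * (Y + 1) * (-(Y)) ≤ t ^ 2 * L * (Y + 1) * (z - ys) :=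
              mul_le_mul_of_nonneg_left hdY (mul_nonneg p1 (by linarith))
            have p3 : t ^ 2 * L * (z - ys) ^ 2 ≤ t ^ 2 * L * Y ^ 2 :=
              mul_le_mul_of_nonneg_left hdsq p1
            have p4 : 0 ≤ t ^ 2 * L * Y := mul_nonneg p1 hY
            have p5 : 0 ≤ t ^ 2 * L * Y ^ 2 := mul_nonneg p1 (sq_nonneg _)
            linarith only [f1, f2, f5, p1, p2, p3, p4, p5]
      obtain ⟨t, ht0, ht1, hkey⟩ := key
      have h3 := step3 z hz t ht0 ht1
      have expand : t * (f ys + αh * (z - ys) - σ * (2 * Y + 1))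
          = t * f ys + t * (αs * (z - ys)) - t * σ * (z - ys) - t * σ * (2 * Y + 1) := by
        rw [hαh_def]; ring
      have hmul : t * (f ys + αh * (z - ys) - σ * (2 * Y + 1)) ≤ t * f z := by
        rw [expand]; linarith only [h3, hkey]
      exact le_of_mul_le_mul_left hmul ht0
    -- pointwise bound for Ψ(z, αh)
    have step5 : ∀ z, 0 ≤ z → αh * (z + x) - f z + (μ - αh) ^ 2 / (2 * L) ≤ S + ε := by
      intro z hz
      have h4 := step4 z hz
      have hnum : (μ - αh) ^ 2 ≤ (μ - αs) ^ 2 + σ * (2 * (|μ| + ρ) + 1) := by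
        have hma : μ - αs ≤ |μ| + ρ := by have := le_abs_self μ; linarith
        have h2σ : σ * (μ - αs) ≤ σ * (|μ| + ρ) := mul_le_mul_of_nonneg_left hma hσ.le
        have hσσ : σ * σ ≤ σ := mul_le_of_le_one_left hσ.le hσ1
        rw [hαh_def]
        nlinarith only [h2σ, hσσ]
      have hdiv : (μ - αh) ^ 2 / (2 * L)
          ≤ (μ - αs) ^ 2 / (2 * L) + σ * ((|μ| + ρ) / L + 1 / (2 * L)) := by
        have h5 := (div_le_div_iff_of_pos_right h2L).mpr hnum
        have heq : ((μ - αs) ^ 2 + σ * (2 * (|μ| + ρ) + 1)) / (2 * L)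
            = (μ - αs) ^ 2 / (2 * L) + σ * ((|μ| + ρ) / L + 1 / (2 * L)) := by
          field_simp
        rw [heq] at h5; exact h5
      have hαhαs : αh * (ys + x) ≤ αs * (ys + x) := by
        have h9 : 0 ≤ σ * (ys + x) := mul_nonneg hσ.le (by linarith)
        rw [hαh_def]; linarith only [h9]
      have hring : αh * (z + x) - αh * (z - ys) = αh * (ys + x) := by ring
      have hmfS : maux L x μ ys - f ys ≤ S := hGleS ys hys
      have hCC : σ * (2 * Y + 1) + σ * ((|μ| + ρ) / L + 1 / (2 * L)) ≤ σ * C := by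
        have h10 : σ * C = σ * (2 * Y + 1) + σ * ((|μ| + ρ) / L + 1 / (2 * L)) + σ := by
          rw [hC_def]; ring
        linarith only [h10, hσ.le]
      linarith only [h4, hdiv, hαhαs, hms, hmfS, hCC, hσε]
    calc sInf {v : ℝ | ∃ α ≤ (0:ℝ), v = sSup {w : ℝ | ∃ y ≥ (0:ℝ),
            w = α * (y + x) - f y + (μ - α) ^ 2 / (2 * L)}}
        ≤ sSup {w : ℝ | ∃ y ≥ (0:ℝ),
            w = αh * (y + x) - f y + (μ - αh) ^ 2 / (2 * L)} := csInf_le hLbdd ⟨αh, hαh, rfl⟩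
      _ ≤ S + ε := by
          refine csSup_le (hFne αh) ?_
          rintro w ⟨z, hz, rfl⟩
          exact step5 z hz
  exact le_antisymm hard easy


/-- Minimax exchange: `Ψ` is concave in `y`, strictly convex in `α`, and
the infimum over `α ≤ 0` and the supremum over `y ≥ 0` commute. -/
theorem stmt_5 (lam : EuclideanSpace ℝ (Fin 3) → ℝ)
    (hlam_cont : Continuous lam) (hlam0 : 0 < lam 0)
    (hlam_bd : ∀ k, 0 ≤ lam k ∧ lam k ≤ lam 0) (hlamL2 : MemLp lam 2 volume)
    (β x μ : ℝ) (hβ : 0 < β) (hx : 0 ≤ x) :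
    (∀ α ≤ (0 : ℝ), ConcaveOn ℝ (Set.Ici (0 : ℝ)) (fun y => Psi lam β x μ y α)) ∧
    (∀ y ≥ (0 : ℝ), StrictConvexOn ℝ (Set.Iic (0 : ℝ)) (fun α => Psi lam β x μ y α)) ∧
    sInf {v : ℝ | ∃ α ≤ (0 : ℝ),
        v = sSup {w : ℝ | ∃ y ≥ (0 : ℝ), w = Psi lam β x μ y α}}
      = sSup {v : ℝ | ∃ y ≥ (0 : ℝ),
        v = sInf {w : ℝ | ∃ α ≤ (0 : ℝ), w = Psi lam β x μ y α}} := by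
  have hπ : (0:ℝ) < (2 * π) ^ 3 := by positivity
  have hA : (0:ℝ) ≤ (β * (2 * π) ^ 3)⁻¹ := by positivity
  have hB : (0:ℝ) ≤ (2 * (2 * π) ^ 3)⁻¹ := by positivity
  have hkey : ∀ α : ℝ, α ≤ 0 → α * x - p0B lam β α x ≤ 0 := by
    intro α hα
    have hI1 : (∫ k : EuclideanSpace ℝ (Fin 3),
        Real.log (1 - Real.exp (-(β * Real.sqrt ((eps k - α) * (eps k - α + 2 * x * lam k)))))) ≤ 0 := by
      apply MeasureTheory.integral_nonpos
      intro k
      simp only [Pi.zero_apply]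
      have h1 : 0 ≤ β * Real.sqrt ((eps k - α) * (eps k - α + 2 * x * lam k)) :=
        mul_nonneg hβ.le (Real.sqrt_nonneg _)
      have h2 : Real.exp (-(β * Real.sqrt ((eps k - α) * (eps k - α + 2 * x * lam k)))) ≤ 1 :=
        Real.exp_le_one_iff.mpr (by linarith)
      have h3 := (Real.exp_pos (-(β * Real.sqrt ((eps k - α) * (eps k - α + 2 * x * lam k))))).le
      exact Real.log_nonpos (by linarith) (by linarith)
    have hI2 : 0 ≤ (∫ k : EuclideanSpace ℝ (Fin 3),
        (eps k - α + x * lam k - Real.sqrt ((eps k - α) * (eps k - α + 2 * x * lam k)))) := by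
      apply MeasureTheory.integral_nonneg
      intro k
      simp only [Pi.zero_apply]
      have he : 0 ≤ eps k := by unfold eps; positivity
      have hlamk : 0 ≤ lam k := (hlam_bd k).1
      have h1 : 0 ≤ eps k - α := by linarith
      have h2 : 0 ≤ x * lam k := mul_nonneg hx hlamk
      have h3 : Real.sqrt ((eps k - α) * (eps k - α + 2 * x * lam k))
          ≤ eps k - α + x * lam k := by
        calc Real.sqrt ((eps k - α) * (eps k - α + 2 * x * lam k))
            ≤ Real.sqrt ((eps k - α + x * lam k) ^ 2) := Real.sqrt_le_sqrt (by nlinarith)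
          _ = eps k - α + x * lam k := Real.sqrt_sq (by linarith)
      linarith
    have e1 : α * x - p0B lam β α x
        = (β * (2 * π) ^ 3)⁻¹ *
            (∫ k : EuclideanSpace ℝ (Fin 3),
              Real.log (1 - Real.exp (-(β * Real.sqrt ((eps k - α) * (eps k - α + 2 * x * lam k))))))
          - (2 * (2 * π) ^ 3)⁻¹ *
            (∫ k : EuclideanSpace ℝ (Fin 3),
              (eps k - α + x * lam k - Real.sqrt ((eps k - α) * (eps k - α + 2 * x * lam k)))) := by
      unfold p0B; ring
    rw [e1]
    have h4 := mul_nonneg hA (neg_nonneg.2 hI1)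
    have h5 := mul_nonneg hB hI2
    nlinarith [h4, h5]
  have hbdd : ∀ y : ℝ, 0 ≤ y →
      BddAbove {v : ℝ | ∃ α ≤ (0:ℝ), v = α * (y + x) - p0B lam β α x} := by
    intro y hy
    refine ⟨0, ?_⟩
    rintro v ⟨α, hα, rfl⟩
    have h1 := hkey α hα
    have h2 : α * y ≤ 0 := mul_nonpos_of_nonpos_of_nonneg hα hy
    nlinarith [h1, h2]
  have hf1 : ∀ y, 0 ≤ y → f0B lam β y x ≤ 0 := by
    intro y hy
    unfold f0B
    refine csSup_le ⟨_, ⟨0, le_rfl, rfl⟩⟩ ?_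
    rintro v ⟨α, hα, rfl⟩
    have h1 := hkey α hα
    have h2 : α * y ≤ 0 := mul_nonpos_of_nonpos_of_nonneg hα hy
    nlinarith [h1, h2]
  have hf2 : ∀ y, 0 ≤ y → -(p0B lam β 0 x) ≤ f0B lam β y x := by
    intro y hy
    exact le_csSup (hbdd y hy) ⟨0, le_rfl, by ring⟩
  have helem : ∀ y, 0 ≤ y → ∀ α, α ≤ (0:ℝ) →
      α * (y + x) - p0B lam β α x ≤ f0B lam β y x :=
    fun y hy α hα => le_csSup (hbdd y hy) ⟨α, hα, rfl⟩
  have hf3 : ∀ a, 0 ≤ a → ∀ b, 0 ≤ b → ∀ ta tb : ℝ, 0 ≤ ta → 0 ≤ tb → ta + tb = 1 →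
      f0B lam β (ta * a + tb * b) x ≤ ta * f0B lam β a x + tb * f0B lam β b x := by
    intro a ha b hb ta tb hta htb hab
    have htb' : tb = 1 - ta := by linarith
    subst htb'
    conv_lhs => rw [f0B]
    refine csSup_le ⟨_, ⟨0, le_rfl, rfl⟩⟩ ?_
    rintro v ⟨α, hα, rfl⟩
    have h1 := helem a ha α hα
    have h2 := helem b hb α hα
    have h3 := mul_le_mul_of_nonneg_left h1 hta
    have h4 := mul_le_mul_of_nonneg_left h2 (by linarith : (0:ℝ) ≤ 1 - ta)
    nlinarith [h3, h4]
  refine ⟨?_, ?_, ?_⟩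
  · -- concavity in y
    intro α hα
    refine ⟨convex_Ici 0, ?_⟩
    intro p hp q hq a b ha hb hab
    have htb' : b = 1 - a := by linarith
    subst htb'
    have h := hf3 p hp q hq a (1 - a) ha (by linarith) (by ring)
    simp only [Psi, smul_eq_mul]
    nlinarith [h]
  · -- strict convexity in α
    intro y hy
    refine ⟨convex_Iic 0, ?_⟩
    intro p hp q hq hpq a b ha hb hab
    have htb' : b = 1 - a := by linarith
    subst htb'
    have h2L : (0:ℝ) < 2 * lam 0 := by linarith
    have hkey2 : (μ - (a * p + (1 - a) * q)) ^ 2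
        < a * (μ - p) ^ 2 + (1 - a) * (μ - q) ^ 2 := by
      have hpq2 : 0 < (p - q) ^ 2 :=
        lt_of_le_of_ne (sq_nonneg _) (Ne.symm (pow_ne_zero 2 (sub_ne_zero.mpr hpq)))
      nlinarith [mul_pos (mul_pos ha (by linarith : (0:ℝ) < 1 - a)) hpq2]
    have hkey3 := (div_lt_div_iff_of_pos_right h2L).mpr hkey2
    simp only [Psi, smul_eq_mul]
    have heq : (a * (μ - p) ^ 2 + (1 - a) * (μ - q) ^ 2) / (2 * lam 0)
        = a * ((μ - p) ^ 2 / (2 * lam 0)) + (1 - a) * ((μ - q) ^ 2 / (2 * lam 0)) := by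
      ring
    rw [heq] at hkey3
    nlinarith [hkey3]
  · -- minimax exchange
    have h := core_minimax (lam 0) x μ (-(p0B lam β 0 x)) hlam0 hx
      (fun y => f0B lam β y x) hf1 hf2 hf3
    simpa only [Psi] using h
end

section
/- (Legendre transform identity of Lemma 'The free-energy density f^{SB} in the thermodynamic limit'.) For every β > 0, x ≥ 0 and y ≥ 0, sup_{μ ∈ ℝ} { μ(y + x) − inf_{α ≤ 0} { p₀ᴮ(β,α,x) + (μ − α)²/(2λ₀) } } = f₀ᴮ(β,y,x) + (λ₀/2)(y + x)². In words: the Legendre–Fenchel transform in μ of the function μ ↦ inf_{α ≤ 0}{ p₀ᴮ(β,α,x) + (μ−α)²/(2λ₀) } equals the Legendre–Fenchel transform f₀ᴮ of p₀ᴮ plus the mean-field term (λ₀/2)(y + x)². -/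
open MeasureTheory Real Filter Set

/-- The pressure is bounded below by `α x`: the log-integral is nonpositive and the
second integrand is nonnegative. -/
lemma p0B_ge (lam : EuclideanSpace ℝ (Fin 3) → ℝ)
    (hlam_bd : ∀ k, 0 ≤ lam k ∧ lam k ≤ lam 0)
    (β x : ℝ) (hβ : 0 < β) (hx : 0 ≤ x) (α : ℝ) (hα : α ≤ 0) :
    α * x ≤ p0B lam β α x := by
  have hπ : (0 : ℝ) < π := Real.pi_pos
  have hI1 : (∫ k : EuclideanSpace ℝ (Fin 3),
      Real.log (1 - Real.exp (-(β * Real.sqrt ((eps k - α) * (eps k - α + 2 * x * lam k))))))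
      ≤ 0 := by
    apply integral_nonpos
    intro k
    have hs : 0 ≤ β * Real.sqrt ((eps k - α) * (eps k - α + 2 * x * lam k)) :=
      mul_nonneg hβ.le (Real.sqrt_nonneg _)
    have hexp1 : Real.exp (-(β * Real.sqrt ((eps k - α) * (eps k - α + 2 * x * lam k)))) ≤ 1 :=
      Real.exp_le_one_iff.mpr (by linarith)
    have hexp0 : 0 < Real.exp (-(β * Real.sqrt ((eps k - α) * (eps k - α + 2 * x * lam k)))) :=
      Real.exp_pos _
    exact Real.log_nonpos (by linarith) (by linarith)
  have hI2 : 0 ≤ (∫ k : EuclideanSpace ℝ (Fin 3),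
      (eps k - α + x * lam k - Real.sqrt ((eps k - α) * (eps k - α + 2 * x * lam k)))) := by
    apply integral_nonneg
    intro k
    have heps : 0 ≤ eps k := by unfold eps; positivity
    have ha : 0 ≤ eps k - α := by linarith
    have hb : 0 ≤ x * lam k := mul_nonneg hx (hlam_bd k).1
    have hsq : Real.sqrt ((eps k - α) * (eps k - α + 2 * x * lam k))
        ≤ eps k - α + x * lam k := by
      have h1 : (eps k - α) * (eps k - α + 2 * x * lam k)
          ≤ (eps k - α + x * lam k) ^ 2 := by nlinarith [sq_nonneg (x * lam k)]
      have h2 := Real.sqrt_le_sqrt h1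
      rwa [Real.sqrt_sq (by linarith)] at h2
    simp only [Pi.zero_apply]
    linarith
  have hc1 : 0 ≤ (β * (2 * π) ^ 3)⁻¹ := by positivity
  have hc2 : 0 ≤ (2 * (2 * π) ^ 3)⁻¹ := by positivity
  have h1 : (β * (2 * π) ^ 3)⁻¹ *
      (∫ k : EuclideanSpace ℝ (Fin 3),
        Real.log (1 - Real.exp (-(β * Real.sqrt ((eps k - α) * (eps k - α + 2 * x * lam k))))))
      ≤ 0 := mul_nonpos_of_nonneg_of_nonpos hc1 hI1
  have h2 : 0 ≤ (2 * (2 * π) ^ 3)⁻¹ *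
      (∫ k : EuclideanSpace ℝ (Fin 3),
        (eps k - α + x * lam k - Real.sqrt ((eps k - α) * (eps k - α + 2 * x * lam k)))) :=
    mul_nonneg hc2 hI2
  unfold p0B
  linarith

/-- Legendre transform identity: the Legendre–Fenchel transform in `μ` of
`μ ↦ inf_{α ≤ 0} {p₀ᴮ(β,α,x) + (μ−α)²/(2λ₀)}` equals `f₀ᴮ(β,y,x) + (λ₀/2)(y+x)²`
(with `λ₀ = λ(0)`). -/
theorem stmt_11 (lam : EuclideanSpace ℝ (Fin 3) → ℝ)
    (hlam_cont : Continuous lam) (hlam0 : 0 < lam 0)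
    (hlam_bd : ∀ k, 0 ≤ lam k ∧ lam k ≤ lam 0) (hlamL2 : MemLp lam 2 volume)
    (β x y : ℝ) (hβ : 0 < β) (hx : 0 ≤ x) (hy : 0 ≤ y) :
    sSup {v : ℝ | ∃ μ : ℝ,
        v = μ * (y + x)
          - sInf {w : ℝ | ∃ α ≤ (0 : ℝ), w = p0B lam β α x + (μ - α) ^ 2 / (2 * lam 0)}}
      = f0B lam β y x + lam 0 / 2 * (y + x) ^ 2 := by
  have ht : 0 ≤ y + x := add_nonneg hy hx
  -- the Legendre set of `p0B`
  have hFs_ne : {v : ℝ | ∃ α ≤ (0 : ℝ), v = α * (y + x) - p0B lam β α x}.Nonempty :=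
    ⟨0 * (y + x) - p0B lam β 0 x, 0, le_refl 0, rfl⟩
  have hFs_bdd : BddAbove {v : ℝ | ∃ α ≤ (0 : ℝ), v = α * (y + x) - p0B lam β α x} := by
    refine ⟨0, ?_⟩
    rintro v ⟨α, hα, rfl⟩
    have h1 := p0B_ge lam hlam_bd β x hβ hx α hα
    nlinarith [mul_nonpos_of_nonpos_of_nonneg hα hy]
  set F : ℝ := f0B lam β y x with hF
  have hFmem : ∀ α ≤ (0 : ℝ), α * (y + x) - p0B lam β α x ≤ F :=
    fun α hα => le_csSup hFs_bdd ⟨α, hα, rfl⟩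
  -- lower bound for elements of the inner inf-sets
  have hW_lb : ∀ μ : ℝ, ∀ w ∈ {w : ℝ | ∃ α ≤ (0 : ℝ),
      w = p0B lam β α x + (μ - α) ^ 2 / (2 * lam 0)},
      μ * (y + x) - F - lam 0 / 2 * (y + x) ^ 2 ≤ w := by
    rintro μ w ⟨α, hα, rfl⟩
    have h1 : α * (y + x) - p0B lam β α x ≤ F := hFmem α hα
    have h2 : (μ - α) * (y + x) - lam 0 / 2 * (y + x) ^ 2 ≤ (μ - α) ^ 2 / (2 * lam 0) := by
      rw [le_div_iff₀ (by positivity)]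
      nlinarith [sq_nonneg (μ - α - lam 0 * (y + x))]
    nlinarith
  have hW_ne : ∀ μ : ℝ, {w : ℝ | ∃ α ≤ (0 : ℝ),
      w = p0B lam β α x + (μ - α) ^ 2 / (2 * lam 0)}.Nonempty :=
    fun μ => ⟨p0B lam β 0 x + (μ - 0) ^ 2 / (2 * lam 0), 0, le_refl 0, rfl⟩
  have hW_bdd : ∀ μ : ℝ, BddBelow {w : ℝ | ∃ α ≤ (0 : ℝ),
      w = p0B lam β α x + (μ - α) ^ 2 / (2 * lam 0)} :=
    fun μ => ⟨μ * (y + x) - F - lam 0 / 2 * (y + x) ^ 2, fun w hw => hW_lb μ w hw⟩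
  -- upper bound for elements of the outer sup-set
  have hS_ub : ∀ v ∈ {v : ℝ | ∃ μ : ℝ,
      v = μ * (y + x)
        - sInf {w : ℝ | ∃ α ≤ (0 : ℝ), w = p0B lam β α x + (μ - α) ^ 2 / (2 * lam 0)}},
      v ≤ F + lam 0 / 2 * (y + x) ^ 2 := by
    rintro v ⟨μ, rfl⟩
    have h1 : μ * (y + x) - F - lam 0 / 2 * (y + x) ^ 2
        ≤ sInf {w : ℝ | ∃ α ≤ (0 : ℝ), w = p0B lam β α x + (μ - α) ^ 2 / (2 * lam 0)} :=
      le_csInf (hW_ne μ) (hW_lb μ)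
    linarith
  have hS_ne : {v : ℝ | ∃ μ : ℝ,
      v = μ * (y + x)
        - sInf {w : ℝ | ∃ α ≤ (0 : ℝ), w = p0B lam β α x + (μ - α) ^ 2 / (2 * lam 0)}}.Nonempty :=
    ⟨_, 0, rfl⟩
  have hS_bdd : BddAbove {v : ℝ | ∃ μ : ℝ,
      v = μ * (y + x)
        - sInf {w : ℝ | ∃ α ≤ (0 : ℝ), w = p0B lam β α x + (μ - α) ^ 2 / (2 * lam 0)}} :=
    ⟨F + lam 0 / 2 * (y + x) ^ 2, hS_ub⟩
  refine le_antisymm (csSup_le hS_ne hS_ub) ?_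
  -- lower bound on the sup
  have key : ∀ α ≤ (0 : ℝ), α * (y + x) - p0B lam β α x
      ≤ sSup {v : ℝ | ∃ μ : ℝ,
          v = μ * (y + x)
            - sInf {w : ℝ | ∃ α ≤ (0 : ℝ), w = p0B lam β α x + (μ - α) ^ 2 / (2 * lam 0)}}
        - lam 0 / 2 * (y + x) ^ 2 := by
    intro α hα
    set μ : ℝ := α + lam 0 * (y + x) with hμ
    have h1 : sInf {w : ℝ | ∃ α ≤ (0 : ℝ), w = p0B lam β α x + (μ - α) ^ 2 / (2 * lam 0)}
        ≤ p0B lam β α x + (μ - α) ^ 2 / (2 * lam 0) :=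
      csInf_le (hW_bdd μ) ⟨α, hα, rfl⟩
    have h2 : (μ - α) ^ 2 / (2 * lam 0) = lam 0 / 2 * (y + x) ^ 2 := by
      rw [hμ]
      field_simp
      ring
    have h3 : μ * (y + x)
        - sInf {w : ℝ | ∃ α ≤ (0 : ℝ), w = p0B lam β α x + (μ - α) ^ 2 / (2 * lam 0)}
        ≤ sSup {v : ℝ | ∃ μ : ℝ,
            v = μ * (y + x)
              - sInf {w : ℝ | ∃ α ≤ (0 : ℝ), w = p0B lam β α x + (μ - α) ^ 2 / (2 * lam 0)}} :=
      le_csSup hS_bdd ⟨μ, rfl⟩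
    have hμt : μ * (y + x) = α * (y + x) + lam 0 * (y + x) ^ 2 := by rw [hμ]; ring
    rw [h2] at h1
    nlinarith
  have hle : F ≤ sSup {v : ℝ | ∃ μ : ℝ,
      v = μ * (y + x)
        - sInf {w : ℝ | ∃ α ≤ (0 : ℝ), w = p0B lam β α x + (μ - α) ^ 2 / (2 * lam 0)}}
      - lam 0 / 2 * (y + x) ^ 2 := by
    rw [hF]
    unfold f0B
    apply csSup_le hFs_ne
    rintro v ⟨α, hα, rfl⟩
    exact key α hα
  linarith
end
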